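/- arXiv:2605.16615 — 5 statements merged into one kernel-verified Lean document; each statement's English description precedes it below -/
import Mathlib

section
/- Let F : ℝ → ℝ be monotone non-decreasing, and let a, b ∈ ℝ³. Define the 3×3 matrix M by M i j = F (a i + b j). Then it is impossible that both chains of strict inequalities hold: M 1 2 < M 2 1 < M 3 1 < M 2 2 and M 2 2 < M 1 3 < M 2 3 < M 3 2 (indices in {1,2,3}). -/
/-- A 3×3 matrix `M i j = F (a i + b j)` with `F` non-decreasing cannot satisfy
both strict chains `M₁₂ < M₂₁ < M₃₁ < M₂₂` and `M₂₂ < M₁₃ < M₂₃ < M₃₂`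
(here indices are 0-based, so matrix entry `(i,j)` of the statement is `M (i-1) (j-1)`). -/
theorem stmt_1 (F : ℝ → ℝ) (hF : Monotone F) (a b : Fin 3 → ℝ)
    (M : Fin 3 → Fin 3 → ℝ) (hM : ∀ i j, M i j = F (a i + b j)) :
    ¬ ((M 0 1 < M 1 0 ∧ M 1 0 < M 2 0 ∧ M 2 0 < M 1 1) ∧
       (M 1 1 < M 0 2 ∧ M 0 2 < M 1 2 ∧ M 1 2 < M 2 1)) := by
  rintro ⟨⟨h1, h2, h3⟩, ⟨h4, h5, h6⟩⟩
  have key : ∀ i j k l : Fin 3, M i j < M k l → a i + b j < a k + b l := by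
    intro i j k l h
    by_contra hc
    push_neg at hc
    have := hF hc
    rw [← hM, ← hM] at this
    exact absurd h (not_lt.mpr this)
  have k1 := key _ _ _ _ h1
  have k3 := key _ _ _ _ h3
  have k4 := key _ _ _ _ h4
  have k6 := key _ _ _ _ h6
  linarith
end

section
/- Let F : ℝ → ℝ be monotone non-decreasing, a ∈ ℝ⁴, b ∈ ℝ³ (not necessarily monotone), and constants γ₁, γ₂, γ₁₂, c ∈ ℝ. Define M i j = F(γ₁·a i + γ₂·b j + γ₁₂·a i·b j + c) for i ∈ {1,2,3,4}, j ∈ {1,2,3}. Then the following four strict inequality chains cannot all simultaneously hold: (1) M 1 2 < M 2 1 < M 3 1 < M 2 2; (2) M 2 2 < M 1 3 < M 2 3 < M 3 2; (3) M 3 1 < M 2 2 < M 3 2 < M 4 1; (4) M 2 3 < M 3 2 < M 4 2 < M 3 3. -/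
/-- Key algebraic lemma: the four "cross" inequalities in multiplicative form,
together with sign coherence of the `p`s and `q`s, are contradictory. -/
lemma key4_aux (p0 p1 p2 q1 q2 q3 : ℝ)
    (hq12 : 0 < q1*q2) (hq23 : 0 < q2*q3) (hp01 : 0 < p0*p1) (hp12 : 0 < p1*p2)
    (Y1 : 0 < q1*p1 - q2*p0) (Y2 : 0 < q3*p0 - q2*p1)
    (Y3 : 0 < q2*p1 - q1*p2) (Y4 : 0 < q2*p2 - q3*p1) : False := by
  rcases lt_trichotomy (q2*p1) 0 with hε | hε | hε
  · have hq3p1 : q3*p1 < 0 := by nlinarith [mul_neg_of_pos_of_neg hq23 hε, sq_nonneg q2]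
    have hq3p0 : q3*p0 < 0 := by nlinarith [mul_neg_of_pos_of_neg hp01 hq3p1, sq_nonneg p1]
    have hq2p2 : q2*p2 < 0 := by nlinarith [mul_neg_of_pos_of_neg hp12 hε, sq_nonneg p1]
    have hq1p1 : q1*p1 < 0 := by nlinarith [mul_neg_of_pos_of_neg hq12 hε, sq_nonneg q2]
    have G1 : 0 < q2*q3*(p1*p1) - q2*q3*(p0*p2) := by
      nlinarith [mul_pos Y2 Y4, mul_pos (neg_pos.mpr hq3p0) Y4, mul_pos (neg_pos.mpr hq2p2) Y2]
    have G2 : 0 < q1*q2*(p0*p2) - q1*q2*(p1*p1) := by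
      nlinarith [mul_pos Y1 Y3, mul_pos (neg_pos.mpr hq1p1) Y3, mul_pos (neg_pos.mpr hε) Y1]
    nlinarith [mul_pos hq12 G1, mul_pos hq23 G2]
  · have h0 : q2*p1*(q1*p2) = 0 := by rw [hε]; ring
    nlinarith [mul_pos hq12 hp12, h0]
  · have hq3p1 : 0 < q3*p1 := by nlinarith [mul_pos hq23 hε, sq_nonneg q2]
    have hq2p0 : 0 < q2*p0 := by nlinarith [mul_pos hp01 hε, sq_nonneg p1]
    have hq1p2 : 0 < q1*p2 := by nlinarith [mul_pos hq12 hp12, hε]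
    have G1 : 0 < q2*q3*(p0*p2) - q2*q3*(p1*p1) := by
      nlinarith [mul_pos Y2 Y4, mul_pos hε Y4, mul_pos hq3p1 Y2]
    have G2 : 0 < q1*q2*(p1*p1) - q1*q2*(p0*p2) := by
      nlinarith [mul_pos Y1 Y3, mul_pos hq2p0 Y3, mul_pos hq1p2 Y1]
    nlinarith [mul_pos hq12 G2, mul_pos hq23 G1]

set_option maxHeartbeats 1000000 in
/-- A 4×3 matrix `M i j = F (γ₁ aᵢ + γ₂ bⱼ + γ₁₂ aᵢ bⱼ + c)` with `F` non-decreasing cannot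
satisfy all four strict chains (0-based indices):
(1) `M₁₂ < M₂₁ < M₃₁ < M₂₂`, (2) `M₂₂ < M₁₃ < M₂₃ < M₃₂`,
(3) `M₃₁ < M₂₂ < M₃₂ < M₄₁`, (4) `M₂₃ < M₃₂ < M₄₂ < M₃₃`. -/
theorem stmt_3 (F : ℝ → ℝ) (hF : Monotone F) (a : Fin 4 → ℝ) (b : Fin 3 → ℝ)
    (γ₁ γ₂ γ₁₂ c : ℝ) (M : Fin 4 → Fin 3 → ℝ)
    (hM : ∀ i j, M i j = F (γ₁ * a i + γ₂ * b j + γ₁₂ * (a i * b j) + c)) :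
    ¬ ((M 0 1 < M 1 0 ∧ M 1 0 < M 2 0 ∧ M 2 0 < M 1 1) ∧
       (M 1 1 < M 0 2 ∧ M 0 2 < M 1 2 ∧ M 1 2 < M 2 1) ∧
       (M 2 0 < M 1 1 ∧ M 1 1 < M 2 1 ∧ M 2 1 < M 3 0) ∧
       (M 1 2 < M 2 1 ∧ M 2 1 < M 3 1 ∧ M 3 1 < M 2 2)) := by
  rintro ⟨⟨m1, m2, m3⟩, ⟨m4, m5, m6⟩, ⟨m7, m8, m9⟩, ⟨m10, m11, m12⟩⟩
  rw [hM, hM] at m1 m2 m3 m4 m5 m6 m8 m9 m11 m12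
  have l2 := hF.reflect_lt m2   -- L10 < L20
  have l3 := hF.reflect_lt m3   -- L20 < L11
  have l4 := hF.reflect_lt m4   -- L11 < L02
  have l5 := hF.reflect_lt m5   -- L02 < L12
  have l6 := hF.reflect_lt m6   -- L12 < L21
  have l7 := hF.reflect_lt m8   -- L11 < L21
  have l8 := hF.reflect_lt m9   -- L21 < L30
  have l9 := hF.reflect_lt m11  -- L21 < L31
  have l10 := hF.reflect_lt m12 -- L31 < L22
  -- abbreviations (as plain expressions):
  -- p_j = γ₁ + γ₁₂ * b j,  q_i = γ₂ + γ₁₂ * a i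
  -- column/row sign facts
  have f1 : 0 < (γ₁ + γ₁₂ * b 0) * (a 2 - a 1) := by linarith [l2]
  have f3 : 0 < (γ₁ + γ₁₂ * b 1) * (a 2 - a 1) := by linarith [l7]
  have f4 : 0 < (γ₁ + γ₁₂ * b 1) * (a 3 - a 2) := by linarith [l9]
  have f6 : 0 < (γ₁ + γ₁₂ * b 2) * (a 2 - a 1) := by linarith [l6, l9, l10]
  have g1w : 0 < (γ₂ + γ₁₂ * a 1) * (b 1 - b 0) := by linarith [l2, l3]
  have g1z : 0 < (γ₂ + γ₁₂ * a 1) * (b 2 - b 1) := by linarith [l4, l5]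
  have g2w : 0 < (γ₂ + γ₁₂ * a 2) * (b 1 - b 0) := by linarith [l3, l7]
  have g2z : 0 < (γ₂ + γ₁₂ * a 2) * (b 2 - b 1) := by linarith [l9, l10]
  have fp2u : 0 < (γ₁ + γ₁₂ * b 2) * (a 3 - a 2) := by
    nlinarith [mul_pos f6 f4, f3]
  have g3z : 0 < (γ₂ + γ₁₂ * a 3) * (b 2 - b 1) := by linarith [l10, fp2u]
  have hq12 : 0 < (γ₂ + γ₁₂ * a 1) * (γ₂ + γ₁₂ * a 2) := by
    nlinarith [mul_pos g1w g2w, sq_nonneg (b 1 - b 0)]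
  have hq23 : 0 < (γ₂ + γ₁₂ * a 2) * (γ₂ + γ₁₂ * a 3) := by
    nlinarith [mul_pos g2z g3z, sq_nonneg (b 2 - b 1)]
  have hp01 : 0 < (γ₁ + γ₁₂ * b 0) * (γ₁ + γ₁₂ * b 1) := by
    nlinarith [mul_pos f1 f3, sq_nonneg (a 2 - a 1)]
  have hp12 : 0 < (γ₁ + γ₁₂ * b 1) * (γ₁ + γ₁₂ * b 2) := by
    nlinarith [mul_pos f3 f6, sq_nonneg (a 2 - a 1)]
  rcases lt_trichotomy γ₁₂ 0 with hs | hs | hs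
  · -- γ₁₂ < 0 : apply the key lemma with indices mirrored
    refine key4_aux (γ₁ + γ₁₂ * b 2) (γ₁ + γ₁₂ * b 1) (γ₁ + γ₁₂ * b 0)
      (γ₂ + γ₁₂ * a 3) (γ₂ + γ₁₂ * a 2) (γ₂ + γ₁₂ * a 1)
      (by linarith [hq23]) (by linarith [hq12]) (by linarith [hp12]) (by linarith [hp01])
      ?_ ?_ ?_ ?_
    · linarith [mul_pos (neg_pos.mpr hs) (sub_pos.mpr l10)]
    · linarith [mul_pos (neg_pos.mpr hs) (sub_pos.mpr l6)]
    · linarith [mul_pos (neg_pos.mpr hs) (sub_pos.mpr l8)]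
    · linarith [mul_pos (neg_pos.mpr hs) (sub_pos.mpr l3)]
  · -- γ₁₂ = 0 : additive case, direct linear contradiction
    rw [hs] at l3 l6 l8 l10
    linarith [l3, l6, l8, l10]
  · -- γ₁₂ > 0
    refine key4_aux (γ₁ + γ₁₂ * b 0) (γ₁ + γ₁₂ * b 1) (γ₁ + γ₁₂ * b 2)
      (γ₂ + γ₁₂ * a 1) (γ₂ + γ₁₂ * a 2) (γ₂ + γ₁₂ * a 3)
      hq12 hq23 hp01 hp12 ?_ ?_ ?_ ?_
    · linarith [mul_pos hs (sub_pos.mpr l3)]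
    · linarith [mul_pos hs (sub_pos.mpr l8)]
    · linarith [mul_pos hs (sub_pos.mpr l6)]
    · linarith [mul_pos hs (sub_pos.mpr l10)]
end

section
/- With the same setup, suppose α_{1,0} = 1/4, α_{0,1} = 0, α_{1,1} = 1, N_{0,1} = 0, and N_{1,0}, N_{1,1} > 0. Then the least squares solution satisfies a₁ < a₂, even though the true function f satisfies f(1,0) > f(0,1). -/
/-- The least-squares objective for fitting `a₁x₁ + a₂x₂` on binary inputs with counts
`N_{x₁,x₂}` and noiseless labels `α_{x₁,x₂}`. -/
noncomputable def olsObj (N00 N10 N01 N11 : ℕ) (α00 α10 α01 α11 : ℝ) (a₁ a₂ : ℝ) : ℝ :=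
  (N00 : ℝ) * α00 ^ 2 + (N10 : ℝ) * (α10 - a₁) ^ 2 + (N01 : ℝ) * (α01 - a₂) ^ 2 +
    (N11 : ℝ) * (α11 - a₁ - a₂) ^ 2

/-- With `α₁₀ = 1/4`, `α₀₁ = 0`, `α₁₁ = 1`, `N₀₁ = 0` and `N₁₀, N₁₁ > 0`, any least-squares
minimizer satisfies `a₁ < a₂`, even though the true function has `f(1,0) > f(0,1)`,
i.e. `α₁₀ > α₀₁`. -/
theorem stmt_8 (N00 N10 N01 N11 : ℕ) (α00 α10 α01 α11 : ℝ)
    (hα00 : α00 = 0) (hα10 : α10 = 1 / 4) (hα01 : α01 = 0) (hα11 : α11 = 1)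
    (hN01 : N01 = 0) (hN10 : 0 < N10) (hN11 : 0 < N11)
    (a₁ a₂ : ℝ)
    (hmin : ∀ b₁ b₂ : ℝ, olsObj N00 N10 N01 N11 α00 α10 α01 α11 a₁ a₂ ≤
      olsObj N00 N10 N01 N11 α00 α10 α01 α11 b₁ b₂) :
    a₁ < a₂ ∧ α10 > α01 := by
  subst hα00 hα10 hα01 hα11 hN01
  have h := hmin (1/4) (3/4)
  unfold olsObj at h
  have h10 : (0:ℝ) < N10 := by exact_mod_cast hN10
  have h11 : (0:ℝ) < N11 := by exact_mod_cast hN11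
  norm_num at h
  have s1 : (1/4 - a₁)^2 = 0 := by
    by_contra hne
    have hp : 0 < (1/4 - a₁)^2 := lt_of_le_of_ne (sq_nonneg _) (Ne.symm hne)
    nlinarith [mul_nonneg h11.le (sq_nonneg (1 - a₁ - a₂)), mul_pos h10 hp]
  have s2 : (1 - a₁ - a₂)^2 = 0 := by
    by_contra hne
    have hp : 0 < (1 - a₁ - a₂)^2 := lt_of_le_of_ne (sq_nonneg _) (Ne.symm hne)
    nlinarith [mul_nonneg h10.le (sq_nonneg (1/4 - a₁)), mul_pos h11 hp]
  have e1 : 1/4 - a₁ = 0 := by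
    have := sq_eq_zero_iff.mp s1; exact this
  have e2 : 1 - a₁ - a₂ = 0 := sq_eq_zero_iff.mp s2
  constructor
  · linarith
  · norm_num
end

section
/- Let M be a 4×4 real matrix and suppose M is 'bivariate isotonic with interactions', i.e., M i j = F(γ₁ a_i + γ₂ b_j + γ₁₂ a_i b_j + c) for some non-decreasing F and reals. Let B = (1/12)·[[1,2,6,12],[3,5,7,12],[4,8,11,12],[9,10,12,12]]. Then ‖M − B‖_F² ≥ 1/288, where ‖·‖_F is the Frobenius norm. -/
lemma pair_bound (mx my bx by' : ℝ) (h : my ≤ mx) (hb : bx + 1/12 ≤ by') :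
    1/288 ≤ (mx - bx)^2 + (my - by')^2 := by
  nlinarith [sq_nonneg (mx - bx + (my - by'))]

lemma core_infeasible (P Q R A1 A2 C1 C2 : ℝ) (hP : 0 < P) (hQ : 0 < Q) (hR : 0 < R)
    (hPA : A1 < P) (hAQ : Q < A2) (hQC : C1 < Q) (hCR : R < C2)
    (idA : A1 * R = A2 * Q) (idC : C1 * Q = C2 * P) : False := by
  have k1 : Q * Q < A1 * R := by nlinarith [mul_lt_mul_of_pos_right hAQ hQ]
  have k2 : A1 * R < P * R := mul_lt_mul_of_pos_right hPA hR
  have k3 : C1 * Q < Q * Q := mul_lt_mul_of_pos_right hQC hQ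
  have k4 : R * P < C2 * P := mul_lt_mul_of_pos_right hCR hP
  nlinarith [k1, k2, k3, k4, idC]

set_option maxHeartbeats 1000000 in
/-- If a 4×4 matrix `M` has the interaction form `M i j = F (γ₁ aᵢ + γ₂ bⱼ + γ₁₂ aᵢbⱼ + c)`
with `F` non-decreasing, then its squared Frobenius distance to the explicit isotonic
matrix `B = (1/12)[[1,2,6,12],[3,5,7,12],[4,8,11,12],[9,10,12,12]]` is at least `1/288`. -/
theorem stmt_9 (F : ℝ → ℝ) (hF : Monotone F) (a b : Fin 4 → ℝ) (γ₁ γ₂ γ₁₂ c : ℝ)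
    (M : Fin 4 → Fin 4 → ℝ)
    (hM : ∀ i j, M i j = F (γ₁ * a i + γ₂ * b j + γ₁₂ * (a i * b j) + c))
    (B : Matrix (Fin 4) (Fin 4) ℝ)
    (hB : B = ((1 : ℝ) / 12) •
      !![(1:ℝ), 2, 6, 12; 3, 5, 7, 12; 4, 8, 11, 12; 9, 10, 12, 12]) :
    (1 : ℝ) / 288 ≤ ∑ i : Fin 4, ∑ j : Fin 4, (M i j - B i j) ^ 2 := by
  subst hB
  by_contra hcon
  push_neg at hcon
  norm_num [Fin.sum_univ_four, Matrix.smul_apply, Matrix.cons_val', Matrix.cons_val_zero,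
    Matrix.cons_val_one, Matrix.head_cons, Matrix.empty_val', Matrix.cons_val_fin_one,
    Matrix.cons_val_two, Matrix.tail_cons, Matrix.cons_val_three, Matrix.vecHead,
    Matrix.vecTail, Function.comp_apply, smul_eq_mul] at hcon
  have sq00 := sq_nonneg (M 0 0 - 1/12)
  have sq03 := sq_nonneg (M 0 3 - 1)
  have sq13 := sq_nonneg (M 1 3 - 1)
  have sq23 := sq_nonneg (M 2 3 - 1)
  have sq30 := sq_nonneg (M 3 0 - 3/4)
  have sq32 := sq_nonneg (M 3 2 - 1)
  have sq33 := sq_nonneg (M 3 3 - 1)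
  have sq01 := sq_nonneg (M 0 1 - 1/6)
  have sq02 := sq_nonneg (M 0 2 - 1/2)
  have sq10 := sq_nonneg (M 1 0 - 1/4)
  have sq11 := sq_nonneg (M 1 1 - 5/12)
  have sq12 := sq_nonneg (M 1 2 - 7/12)
  have sq20 := sq_nonneg (M 2 0 - 1/3)
  have sq21 := sq_nonneg (M 2 1 - 2/3)
  have sq22 := sq_nonneg (M 2 2 - 11/12)
  have sq31 := sq_nonneg (M 3 1 - 5/6)
  have h1 : M 0 1 < M 1 0 := by
    by_contra h; push_neg at h
    have := pair_bound (M 0 1) (M 1 0) (1/6) (1/4) h (by norm_num); linarith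
  have h2 : M 1 0 < M 2 0 := by
    by_contra h; push_neg at h
    have := pair_bound (M 1 0) (M 2 0) (1/4) (1/3) h (by norm_num); linarith
  have h3 : M 2 0 < M 1 1 := by
    by_contra h; push_neg at h
    have := pair_bound (M 2 0) (M 1 1) (1/3) (5/12) h (by norm_num); linarith
  have h4 : M 1 1 < M 0 2 := by
    by_contra h; push_neg at h
    have := pair_bound (M 1 1) (M 0 2) (5/12) (1/2) h (by norm_num); linarith
  have h5 : M 0 2 < M 1 2 := by
    by_contra h; push_neg at h
    have := pair_bound (M 0 2) (M 1 2) (1/2) (7/12) h (by norm_num); linarith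
  have h6 : M 1 2 < M 2 1 := by
    by_contra h; push_neg at h
    have := pair_bound (M 1 2) (M 2 1) (7/12) (2/3) h (by norm_num); linarith
  have h7 : M 1 1 < M 2 1 := by
    by_contra h; push_neg at h
    have := pair_bound (M 1 1) (M 2 1) (5/12) (2/3) h (by norm_num); linarith
  have h8 : M 2 1 < M 3 0 := by
    by_contra h; push_neg at h
    have := pair_bound (M 2 1) (M 3 0) (2/3) (3/4) h (by norm_num); linarith
  have h9 : M 2 1 < M 3 1 := by
    by_contra h; push_neg at h
    have := pair_bound (M 2 1) (M 3 1) (2/3) (5/6) h (by norm_num); linarith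
  have h10 : M 3 1 < M 2 2 := by
    by_contra h; push_neg at h
    have := pair_bound (M 3 1) (M 2 2) (5/6) (11/12) h (by norm_num); linarith
  have R : ∀ i j i' j' : Fin 4, M i j < M i' j' →
      γ₁ * a i + γ₂ * b j + γ₁₂ * (a i * b j) + c <
      γ₁ * a i' + γ₂ * b j' + γ₁₂ * (a i' * b j') + c := by
    intro i j i' j' h
    rw [hM i j, hM i' j'] at h
    exact hF.reflect_lt h
  have t1 := R _ _ _ _ h1
  have t2 := R _ _ _ _ h2
  have t3 := R _ _ _ _ h3
  have t4 := R _ _ _ _ h4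
  have t5 := R _ _ _ _ h5
  have t6 := R _ _ _ _ h6
  have t7 := R _ _ _ _ h7
  have t8 := R _ _ _ _ h8
  have t9 := R _ _ _ _ h9
  have t10 := R _ _ _ _ h10
  clear h1 h2 h3 h4 h5 h6 h7 h8 h9 h10 hcon hM R
  clear sq00 sq01 sq02 sq03 sq10 sq11 sq12 sq13 sq20 sq21 sq22 sq23 sq30 sq31 sq32 sq33
  refine core_infeasible
    ((γ₁ + γ₁₂ * b 1) * (a 1 - a 0)) ((γ₁ + γ₁₂ * b 1) * (a 2 - a 1))
    ((γ₁ + γ₁₂ * b 1) * (a 3 - a 2))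
    ((γ₁ + γ₁₂ * b 0) * (a 2 - a 1)) ((γ₁ + γ₁₂ * b 0) * (a 3 - a 2))
    ((γ₁ + γ₁₂ * b 2) * (a 1 - a 0)) ((γ₁ + γ₁₂ * b 2) * (a 2 - a 1))
    ?_ ?_ ?_ ?_ ?_ ?_ ?_ (by ring) (by ring)
  · nlinarith [t1, t2, t3]
  · nlinarith [t7]
  · nlinarith [t9]
  · nlinarith [t1, t3]
  · nlinarith [t3, t8]
  · nlinarith [t4, t6]
  · nlinarith [t6, t10]
end

section
/- Let S ⊆ X = (Fin m)^d be nonempty and let f : S → [0,1] be isotonic on S (f(z) ≥ f(z') whenever z ≥ z' coordinate-wise for z, z' ∈ S). Extend f to all of X by setting, for x ∉ S, f̂(x) = (min A(x) + max B(x))/2, where A(x) = {f(z) : z ∈ S, z ≥ x} ∪ {max_{z∈S} f(z)} and B(x) = {f(z) : z ∈ S, z ≤ x} ∪ {min_{z∈S} f(z)}, and f̂(x) = f(x) for x ∈ S. Then f̂ is isotonic on X and takes values in [0,1]. -/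
open Finset

/-- The interpolated extension of an isotonic partial function `f` observed on a nonempty
finite set `S ⊆ (Fin m)^d`: on `S` it equals `f`; off `S` it is the average of
`min A(x)` and `max B(x)`, where
`A(x) = {f z : z ∈ S, z ≥ x} ∪ {max_{z∈S} f z}` and
`B(x) = {f z : z ∈ S, z ≤ x} ∪ {min_{z∈S} f z}`. -/
noncomputable def interpExt (d m : ℕ) (S : Finset (Fin d → Fin m)) (hS : S.Nonempty)
    (f : (Fin d → Fin m) → ℝ) (x : Fin d → Fin m) : ℝ :=
  if x ∈ S then f x
  else
    ((insert (S.sup' hS f) ((S.filter (fun z => ∀ k, x k ≤ z k)).image f)).min'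
        (Finset.insert_nonempty _ _) +
      (insert (S.inf' hS f) ((S.filter (fun z => ∀ k, z k ≤ x k)).image f)).max'
        (Finset.insert_nonempty _ _)) / 2

/-- Interpolating an isotonic `[0,1]`-valued partial function on a nonempty `S ⊆ (Fin m)^d`
by averaging the smallest dominating and largest dominated observed values yields an
isotonic total function with values in `[0,1]`. -/
theorem stmt_14 (d m : ℕ) (S : Finset (Fin d → Fin m)) (hS : S.Nonempty)
    (f : (Fin d → Fin m) → ℝ)
    (hf01 : ∀ z ∈ S, f z ∈ Set.Icc (0 : ℝ) 1)
    (hiso : ∀ z ∈ S, ∀ z' ∈ S, (∀ k, z' k ≤ z k) → f z' ≤ f z) :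
    (∀ x y : Fin d → Fin m, (∀ k, x k ≤ y k) →
      interpExt d m S hS f x ≤ interpExt d m S hS f y) ∧
    (∀ x, interpExt d m S hS f x ∈ Set.Icc (0 : ℝ) 1) := by
  classical
  set A : (Fin d → Fin m) → Finset ℝ := fun x =>
    insert (S.sup' hS f) ((S.filter (fun z => ∀ k, x k ≤ z k)).image f) with hA
  set B : (Fin d → Fin m) → Finset ℝ := fun x =>
    insert (S.inf' hS f) ((S.filter (fun z => ∀ k, z k ≤ x k)).image f) with hB
  have hAne : ∀ x, (A x).Nonempty := fun _ => Finset.insert_nonempty _ _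
  have hBne : ∀ x, (B x).Nonempty := fun _ => Finset.insert_nonempty _ _
  set mn : (Fin d → Fin m) → ℝ := fun x => (A x).min' (hAne x) with hmn
  set mx : (Fin d → Fin m) → ℝ := fun x => (B x).max' (hBne x) with hmx
  -- every element of A x / B x is a value of f on S
  have hAmem : ∀ x a, a ∈ A x → ∃ z ∈ S, f z = a := by
    intro x a ha
    rcases Finset.mem_insert.1 ha with h | h
    · obtain ⟨z, hz, hze⟩ := Finset.exists_mem_eq_sup' hS f
      exact ⟨z, hz, by rw [h, hze]⟩
    · obtain ⟨z, hz, hze⟩ := Finset.mem_image.1 h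
      exact ⟨z, (Finset.mem_filter.1 hz).1, hze⟩
  have hBmem : ∀ x b, b ∈ B x → ∃ z ∈ S, f z = b := by
    intro x b hb
    rcases Finset.mem_insert.1 hb with h | h
    · obtain ⟨z, hz, hze⟩ := Finset.exists_mem_eq_inf' hS f
      exact ⟨z, hz, by rw [h, hze]⟩
    · obtain ⟨z, hz, hze⟩ := Finset.mem_image.1 h
      exact ⟨z, (Finset.mem_filter.1 hz).1, hze⟩
  -- every element of A x dominates every element of B x
  have hBA : ∀ x b, b ∈ B x → ∀ a, a ∈ A x → b ≤ a := by
    intro x b hb a ha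
    rcases Finset.mem_insert.1 ha with h | h
    · obtain ⟨z, hz, hze⟩ := hBmem x b hb
      rw [h, ← hze]; exact Finset.le_sup' f hz
    · obtain ⟨z, hz, hze⟩ := Finset.mem_image.1 h
      rcases Finset.mem_filter.1 hz with ⟨hzS, hzx⟩
      rcases Finset.mem_insert.1 hb with h' | h'
      · rw [h', ← hze]; exact Finset.inf'_le f hzS
      · obtain ⟨z', hz', hze'⟩ := Finset.mem_image.1 h'
        rcases Finset.mem_filter.1 hz' with ⟨hz'S, hz'x⟩
        rw [← hze, ← hze']
        exact hiso z hzS z' hz'S (fun k => le_trans (hz'x k) (hzx k))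
  have hmxmn : ∀ x, mx x ≤ mn x := by
    intro x
    apply Finset.max'_le
    intro b hb
    apply Finset.le_min'
    intro a ha
    exact hBA x b hb a ha
  -- range of mn, mx
  have hmn01 : ∀ x, mn x ∈ Set.Icc (0:ℝ) 1 := by
    intro x
    obtain ⟨z, hz, hze⟩ := hAmem x _ (Finset.min'_mem (A x) (hAne x))
    rw [hmn]; simp only [← hze]; exact hf01 z hz
  have hmx01 : ∀ x, mx x ∈ Set.Icc (0:ℝ) 1 := by
    intro x
    obtain ⟨z, hz, hze⟩ := hBmem x _ (Finset.max'_mem (B x) (hBne x))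
    rw [hmx]; simp only [← hze]; exact hf01 z hz
  -- monotonicity of A, B as sets
  have hAsub : ∀ x y : Fin d → Fin m, (∀ k, x k ≤ y k) → A y ⊆ A x := by
    intro x y hxy
    apply Finset.insert_subset_insert
    apply Finset.image_subset_image
    intro a ha
    rcases Finset.mem_filter.1 ha with ⟨haS, hza⟩
    exact Finset.mem_filter.2 ⟨haS, fun k => le_trans (hxy k) (hza k)⟩
  have hBsub : ∀ x y : Fin d → Fin m, (∀ k, x k ≤ y k) → B x ⊆ B y := by
    intro x y hxy
    apply Finset.insert_subset_insert
    apply Finset.image_subset_image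
    intro a ha
    rcases Finset.mem_filter.1 ha with ⟨haS, hza⟩
    exact Finset.mem_filter.2 ⟨haS, fun k => le_trans (hza k) (hxy k)⟩
  have hmnmono : ∀ x y : Fin d → Fin m, (∀ k, x k ≤ y k) → mn x ≤ mn y :=
    fun x y hxy => Finset.min'_le _ _ (hAsub x y hxy (Finset.min'_mem (A y) (hAne y)))
  have hmxmono : ∀ x y : Fin d → Fin m, (∀ k, x k ≤ y k) → mx x ≤ mx y :=
    fun x y hxy => Finset.le_max' _ _ (hBsub x y hxy (Finset.max'_mem (B x) (hBne x)))
  -- comparisons with f on S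
  have hf_le_mn : ∀ x ∈ S, ∀ y : Fin d → Fin m, (∀ k, x k ≤ y k) → f x ≤ mn y := by
    intro x hx y hxy
    apply Finset.le_min'
    intro a ha
    rcases Finset.mem_insert.1 ha with h | h
    · rw [h]; exact Finset.le_sup' f hx
    · obtain ⟨z, hz, hze⟩ := Finset.mem_image.1 h
      rcases Finset.mem_filter.1 hz with ⟨hzS, hzy⟩
      rw [← hze]
      exact hiso z hzS x hx (fun k => le_trans (hxy k) (hzy k))
  have hf_le_mx : ∀ x ∈ S, ∀ y : Fin d → Fin m, (∀ k, x k ≤ y k) → f x ≤ mx y := by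
    intro x hx y hxy
    exact Finset.le_max' _ _ (Finset.mem_insert_of_mem
      (Finset.mem_image_of_mem f (Finset.mem_filter.2 ⟨hx, hxy⟩)))
  have hmn_le_f : ∀ y ∈ S, ∀ x : Fin d → Fin m, (∀ k, x k ≤ y k) → mn x ≤ f y := by
    intro y hy x hxy
    exact Finset.min'_le _ _ (Finset.mem_insert_of_mem
      (Finset.mem_image_of_mem f (Finset.mem_filter.2 ⟨hy, hxy⟩)))
  have hmx_le_f : ∀ y ∈ S, ∀ x : Fin d → Fin m, (∀ k, x k ≤ y k) → mx x ≤ f y := by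
    intro y hy x hxy
    apply Finset.max'_le
    intro b hb
    rcases Finset.mem_insert.1 hb with h | h
    · rw [h]; exact Finset.inf'_le f hy
    · obtain ⟨z, hz, hze⟩ := Finset.mem_image.1 h
      rcases Finset.mem_filter.1 hz with ⟨hzS, hzx⟩
      rw [← hze]
      exact hiso y hy z hzS (fun k => le_trans (hzx k) (hxy k))
  have hval : ∀ x, x ∉ S → interpExt d m S hS f x = (mn x + mx x) / 2 := by
    intro x hx
    simp only [interpExt, if_neg hx]
    rfl
  have hvalS : ∀ x, x ∈ S → interpExt d m S hS f x = f x := by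
    intro x hx
    simp only [interpExt, if_pos hx]
  constructor
  · intro x y hxy
    by_cases hx : x ∈ S <;> by_cases hy : y ∈ S
    · rw [hvalS x hx, hvalS y hy]; exact hiso y hy x hx hxy
    · rw [hvalS x hx, hval y hy]
      have h1 := hf_le_mn x hx y hxy
      have h2 := hf_le_mx x hx y hxy
      linarith
    · rw [hval x hx, hvalS y hy]
      have h1 := hmn_le_f y hy x hxy
      have h2 := hmx_le_f y hy x hxy
      linarith
    · rw [hval x hx, hval y hy]
      have h1 := hmnmono x y hxy
      have h2 := hmxmono x y hxy
      linarith
  · intro x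
    by_cases hx : x ∈ S
    · rw [hvalS x hx]; exact hf01 x hx
    · rw [hval x hx]
      have h1 := hmn01 x
      have h2 := hmx01 x
      rcases h1 with ⟨h1a, h1b⟩
      rcases h2 with ⟨h2a, h2b⟩
      constructor <;> [linarith; linarith]
end
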